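/- Let u : [0,∞) → (0,∞) be continuous with lim_{r→∞} log u(r)/log r = ∞. If u satisfies inf_{r≥0} u(r) = 1 and limsup_{r→∞} (log u(r))/r < ∞, then the sequence α_u(n) = 1/(n! ℓ_u(n)) satisfies: α_u(0) = 1 and inf_{n≥0} α_u(n) σ^n > 0 for some σ ≥ 1. -/

import Mathlib

noncomputable def ell (u : ℝ → ℝ) (t : ℝ) : ℝ :=
  ⨅ r : {r : ℝ // 0 < r}, u r / (r : ℝ) ^ t

theorem alpha_u_satisfies_A1 (u : ℝ → ℝ)
    (hpos : ∀ r ≥ 0, 0 < u r)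
    (hcont : ContinuousOn u (Set.Ici 0))
    (hlim : Filter.Tendsto (fun r => Real.log (u r) / Real.log r)
      Filter.atTop Filter.atTop)
    (hU0 : IsGLB (u '' Set.Ici 0) 1)
    (hU2 : ∃ C : ℝ, ∀ᶠ r in Filter.atTop, Real.log (u r) / r ≤ C) :
    (1 / ((Nat.factorial 0 : ℝ) * ell u 0) = 1) ∧
    ∃ σ ≥ (1 : ℝ), ∃ ε > (0 : ℝ), ∀ n : ℕ,
      ε ≤ 1 / ((n.factorial : ℝ) * ell u n) * σ ^ n := by
  have hU1 : ∀ r : ℝ, 0 ≤ r → 1 ≤ u r := fun r hr => hU0.1 ⟨r, hr, rfl⟩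
  have hbdd : ∀ t : ℝ, BddBelow (Set.range fun r : {r : ℝ // 0 < r} => u r / (r : ℝ) ^ t) := by
    intro t
    refine ⟨0, ?_⟩
    rintro x ⟨r, rfl⟩
    exact (div_pos (hpos r r.2.le) (Real.rpow_pos_of_pos r.2 t)).le
  have hle : ∀ t : ℝ, ∀ r : {r : ℝ // 0 < r}, ell u t ≤ u r / (r : ℝ) ^ t :=
    fun t r => ciInf_le (hbdd t) r
  have hnonneg : ∀ t : ℝ, 0 ≤ ell u t := by
    intro t
    exact le_ciInf fun r => (div_pos (hpos r r.2.le) (Real.rpow_pos_of_pos r.2 t)).le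
  constructor
  · have hlow : (1:ℝ) ≤ ell u 0 := by
      apply le_ciInf
      intro r
      rw [Real.rpow_zero, div_one]
      exact hU1 r r.2.le
    have hup : ell u 0 ≤ 1 := by
      apply hU0.2
      rintro x ⟨r, hr, rfl⟩
      rcases eq_or_lt_of_le (show (0:ℝ) ≤ r from hr) with h | h
      · have htend : Filter.Tendsto u (nhdsWithin 0 (Set.Ioi 0)) (nhds (u 0)) := by
          have h1 : ContinuousWithinAt u (Set.Ici 0) 0 := hcont 0 Set.self_mem_Ici
          exact h1.tendsto.mono_left (nhdsWithin_mono _ Set.Ioi_subset_Ici_self)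
        have : ell u 0 ≤ u 0 := by
          refine ge_of_tendsto htend ?_
          filter_upwards [self_mem_nhdsWithin] with x hx
          calc ell u 0 ≤ u x / (x:ℝ) ^ (0:ℝ) := hle 0 ⟨x, hx⟩
            _ = u x := by rw [Real.rpow_zero, div_one]
        rwa [← h]
      · have h2 := hle 0 ⟨r, h⟩
        simpa [Real.rpow_zero] using h2
    have : ell u 0 = 1 := le_antisymm hup hlow
    simp [this]
  · obtain ⟨C, hC⟩ := hU2
    obtain ⟨R₀, hR₀⟩ := Filter.eventually_atTop.mp hC
    set R : ℝ := max R₀ 1 with hRdef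
    have hR1 : (1:ℝ) ≤ R := le_max_right _ _
    refine ⟨max 1 (Real.exp C), le_max_left _ _, Real.exp (-(C * R)), Real.exp_pos _, ?_⟩
    intro n
    set σ : ℝ := max 1 (Real.exp C) with hσdef
    -- positivity of ell u n
    have hln : 0 < ell u (n : ℝ) := by
      obtain ⟨S₀, hS₀⟩ := Filter.eventually_atTop.mp (hlim.eventually_ge_atTop (n:ℝ))
      set S : ℝ := max S₀ 2 with hSdef
      have hS1 : (1:ℝ) < S := lt_of_lt_of_le one_lt_two (le_max_right _ _)
      have key : ∀ x : {r:ℝ//0<r}, S ^ (-(n:ℝ)) ≤ u x / (x:ℝ) ^ (n:ℝ) := by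
        intro x
        rcases le_or_gt S x with hx | hx
        · have hlog : 0 < Real.log x := Real.log_pos (lt_of_lt_of_le hS1 hx)
          have h1 := hS₀ x (le_trans (le_max_left _ _) hx)
          have h2 : (n:ℝ) * Real.log x ≤ Real.log (u x) := by
            rw [le_div_iff₀ hlog] at h1; linarith
          have h3 : (x:ℝ) ^ (n:ℝ) ≤ u x := by
            rw [Real.rpow_def_of_pos x.2]
            calc Real.exp (Real.log x * (n:ℝ)) = Real.exp ((n:ℝ) * Real.log x) := by
                  rw [mul_comm]
              _ ≤ Real.exp (Real.log (u x)) := Real.exp_le_exp.mpr h2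
              _ = u x := Real.exp_log (hpos x x.2.le)
          have h4 : (1:ℝ) ≤ u x / (x:ℝ) ^ (n:ℝ) :=
            (one_le_div (Real.rpow_pos_of_pos x.2 _)).mpr h3
          calc S ^ (-(n:ℝ)) ≤ 1 :=
                Real.rpow_le_one_of_one_le_of_nonpos hS1.le (neg_nonpos.mpr (Nat.cast_nonneg n))
            _ ≤ _ := h4
        · have hx1 : (x:ℝ) ^ (n:ℝ) ≤ S ^ (n:ℝ) :=
            Real.rpow_le_rpow x.2.le hx.le (Nat.cast_nonneg n)
          have hSn : S ^ (-(n:ℝ)) = 1 / S ^ (n:ℝ) := by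
            rw [Real.rpow_neg (by linarith), one_div]
          rw [hSn]
          calc 1 / S ^ (n:ℝ) ≤ 1 / (x:ℝ) ^ (n:ℝ) :=
                one_div_le_one_div_of_le (Real.rpow_pos_of_pos x.2 _) hx1
            _ ≤ u x / (x:ℝ) ^ (n:ℝ) :=
                (div_le_div_iff_of_pos_right (Real.rpow_pos_of_pos x.2 _)).mpr (hU1 x x.2.le)
      exact lt_of_lt_of_le (Real.rpow_pos_of_pos (lt_trans one_pos hS1) _) (le_ciInf key)
    -- upper bound
    set r : ℝ := (n : ℝ) + R with hrdef
    have hrpos : 0 < r := by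
      have : (0:ℝ) ≤ (n:ℝ) := Nat.cast_nonneg n
      linarith
    have hrR : R ≤ r := by
      have : (0:ℝ) ≤ (n:ℝ) := Nat.cast_nonneg n
      linarith
    have hru : u r ≤ Real.exp (C * r) := by
      have h1 := hR₀ r (le_trans (le_max_left _ _) hrR)
      have h2 : Real.log (u r) ≤ C * r := by
        rw [div_le_iff₀ hrpos] at h1; linarith
      calc u r = Real.exp (Real.log (u r)) := (Real.exp_log (hpos r hrpos.le)).symm
        _ ≤ _ := Real.exp_le_exp.mpr h2
    have hfact : ((n.factorial : ℕ) : ℝ) ≤ r ^ (n:ℝ) := by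
      rw [Real.rpow_natCast]
      calc ((n.factorial : ℕ) : ℝ) ≤ ((n ^ n : ℕ) : ℝ) := by
            exact_mod_cast Nat.factorial_le_pow n
        _ = ((n:ℝ)) ^ n := by push_cast; ring
        _ ≤ r ^ n := pow_le_pow_left₀ (Nat.cast_nonneg n) (by linarith [hR1]) n
    have hPle : (n.factorial : ℝ) * ell u (n:ℝ) ≤ Real.exp (C * r) := by
      have h1 : ell u (n:ℝ) ≤ u r / r ^ (n:ℝ) := hle (n:ℝ) ⟨r, hrpos⟩
      have h2 : ell u (n:ℝ) ≤ Real.exp (C * r) / r ^ (n:ℝ) :=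
        le_trans h1 ((div_le_div_iff_of_pos_right (Real.rpow_pos_of_pos hrpos _)).mpr hru)
      calc (n.factorial : ℝ) * ell u (n:ℝ)
          ≤ r ^ (n:ℝ) * (Real.exp (C * r) / r ^ (n:ℝ)) :=
            mul_le_mul hfact h2 (hnonneg _) (Real.rpow_pos_of_pos hrpos _).le
        _ = Real.exp (C * r) := by
            field_simp
    have hP : 0 < (n.factorial : ℝ) * ell u (n:ℝ) :=
      mul_pos (by exact_mod_cast n.factorial_pos) hln
    have hσn : Real.exp (C * (n:ℝ)) ≤ σ ^ n := by
      rw [mul_comm, Real.exp_nat_mul]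
      exact pow_le_pow_left₀ (Real.exp_pos C).le (le_max_right _ _) n
    rw [one_div, inv_mul_eq_div, le_div_iff₀ hP]
    calc Real.exp (-(C * R)) * ((n.factorial : ℝ) * ell u (n:ℝ))
        ≤ Real.exp (-(C * R)) * Real.exp (C * r) :=
          mul_le_mul_of_nonneg_left hPle (Real.exp_pos _).le
      _ = Real.exp (C * (n:ℝ)) := by
          rw [← Real.exp_add]
          congr 1
          rw [hrdef]; ring
      _ ≤ σ ^ n := hσn
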